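/- Let H be a unicyclic graph, let w ∈ V(H), and let G be the unicyclic graph obtained from H by attaching a pendant path of length 2 at w: add two new vertices v and u together with the edges wv and vu. Then φ(G) ≥ φ(H) + 1, i.e., φ(G) ≥ φ(G − {u, v}) + 1. -/

import Mathlib

open SimpleGraph

/-- A dissociation set: a set of vertices inducing a subgraph of maximum degree at most 1,
i.e., every vertex of `S` has at most one neighbour inside `S`. -/
def IsDissoc {V : Type*} (G : SimpleGraph V) (S : Set V) : Prop :=
  ∀ v ∈ S, {u | u ∈ S ∧ G.Adj v u}.Subsingleton

/-- A maximal dissociation set: a dissociation set not properly contained in another one. -/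
def IsMaxDissoc {V : Type*} (G : SimpleGraph V) (S : Set V) : Prop :=
  IsDissoc G S ∧ ∀ T : Set V, IsDissoc G T → S ⊆ T → S = T

/-- `phi G` is the number of maximal dissociation sets of `G`. -/
noncomputable def phi {V : Type*} (G : SimpleGraph V) : ℕ :=
  {S : Set V | IsMaxDissoc G S}.ncard

/-- The number of maximal dissociation sets of `G` not containing `u`. -/
noncomputable def phiNot {V : Type*} (G : SimpleGraph V) (u : V) : ℕ :=
  {S : Set V | IsMaxDissoc G S ∧ u ∉ S}.ncard

/-- The number of maximal dissociation sets `S` of `G` with `u ∈ S` and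
`u` of degree 0 in the subgraph induced by `S`. -/
noncomputable def phi0 {V : Type*} (G : SimpleGraph V) (u : V) : ℕ :=
  {S : Set V | IsMaxDissoc G S ∧ u ∈ S ∧ ∀ x ∈ S, ¬ G.Adj u x}.ncard

/-- The number of maximal dissociation sets `S` of `G` with `u ∈ S` and
`u` of degree 1 in the subgraph induced by `S`. -/
noncomputable def phi1 {V : Type*} (G : SimpleGraph V) (u : V) : ℕ :=
  {S : Set V | IsMaxDissoc G S ∧ u ∈ S ∧ ∃! x, x ∈ S ∧ G.Adj u x}.ncard

/-- A unicyclic graph: a connected graph whose number of edges equals its number of vertices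
(equivalently, a connected graph with exactly one cycle). -/
def IsUnicyclic {V : Type*} [Fintype V] (G : SimpleGraph V) : Prop :=
  G.Connected ∧ G.edgeSet.ncard = Fintype.card V

/-- The tree `T(p,q)` (for `q ≤ p`): obtained from the star `K_{1,p}` by subdividing
exactly `q` of its edges.  The centre is `Sum.inl ()`, the `p` neighbours of the centre are
`Sum.inr (Sum.inl i)`, and for `j < q` the vertex `Sum.inr (Sum.inr j)` is the subdivision
pendant attached to the `j`-th neighbour.  It has `1 + p + q` vertices. -/
def treeT (p q : ℕ) (h : q ≤ p) : SimpleGraph (Unit ⊕ Fin p ⊕ Fin q) :=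
  SimpleGraph.fromRel fun a b =>
    (∃ i : Fin p, a = Sum.inl () ∧ b = Sum.inr (Sum.inl i)) ∨
    (∃ j : Fin q, a = Sum.inr (Sum.inl (Fin.castLE h j)) ∧ b = Sum.inr (Sum.inr j))

/-- The unicyclic graph `U(p,q)` (for `q ≤ p`): obtained by identifying one vertex of the
triangle `K₃` with the centre of `T(p,q)`.  The centre is `Sum.inl ()`, the two other triangle
vertices are `Sum.inr (Sum.inl 0)` and `Sum.inr (Sum.inl 1)`, and the copy of `T(p,q)` sits on
the remaining vertices.  It has `3 + p + q` vertices. -/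
def graphU (p q : ℕ) (h : q ≤ p) : SimpleGraph (Unit ⊕ Fin 2 ⊕ Fin p ⊕ Fin q) :=
  SimpleGraph.fromRel fun a b =>
    (a = Sum.inl () ∧ b = Sum.inr (Sum.inl 0)) ∨
    (a = Sum.inl () ∧ b = Sum.inr (Sum.inl 1)) ∨
    (a = Sum.inr (Sum.inl 0) ∧ b = Sum.inr (Sum.inl 1)) ∨
    (∃ i : Fin p, a = Sum.inl () ∧ b = Sum.inr (Sum.inr (Sum.inl i))) ∨
    (∃ j : Fin q, a = Sum.inr (Sum.inr (Sum.inl (Fin.castLE h j))) ∧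
      b = Sum.inr (Sum.inr (Sum.inr j)))

/-- The unicyclic graph obtained from the cycle `C_r` by attaching one pendant vertex
`Sum.inr j` to the cycle vertex `Sum.inl (f j)` for each `j : Fin t`.  For injective `f`
this is a member of the class `𝒰_{r,t}`. -/
def graphUrtF (r t : ℕ) (f : Fin t → Fin r) : SimpleGraph (Fin r ⊕ Fin t) :=
  SimpleGraph.fromRel fun a b =>
    (∃ i j : Fin r, a = Sum.inl i ∧ b = Sum.inl j ∧ (cycleGraph r).Adj i j) ∨
    (∃ j : Fin t, a = Sum.inl (f j) ∧ b = Sum.inr j)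

/-- The canonical member `U_{r,t}` of `𝒰_{r,t}` (for `t ≤ r`): the cycle `C_r` with one
pendant vertex attached to each of its first `t` vertices. -/
def graphUrt (r t : ℕ) (h : t ≤ r) : SimpleGraph (Fin r ⊕ Fin t) :=
  graphUrtF r t (Fin.castLE h)

/-- A caterpillar: a tree in which deleting all vertices of degree 1 leaves a path. -/
def IsCaterpillar {V : Type*} [Fintype V] (G : SimpleGraph V) : Prop :=
  G.IsTree ∧ ∃ m : ℕ,
    Nonempty ((G.induce {v | 2 ≤ (G.neighborSet v).ncard}) ≃g SimpleGraph.pathGraph m)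

/-- The graph `G₁` obtained from `U` by adding `k` new pendant vertices
`v₁ = Sum.inr 0, …, v_k = Sum.inr (k-1)`, each adjacent to `w`. -/
def addPendants {V : Type*} (U : SimpleGraph V) (w : V) (k : ℕ) : SimpleGraph (V ⊕ Fin k) :=
  SimpleGraph.fromRel fun a b =>
    (∃ x y, a = Sum.inl x ∧ b = Sum.inl y ∧ U.Adj x y) ∨
    (∃ j : Fin k, a = Sum.inl w ∧ b = Sum.inr j)

/-- The graph `G₂ = G₁ - w v_k + v₁ v_k`: obtained from `U` by attaching the pendant vertices
`v₁, …, v_{k-1}` to `w` and the vertex `v_k` to `v₁`. -/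
def swapPendant {V : Type*} (U : SimpleGraph V) (w : V) (k : ℕ) : SimpleGraph (V ⊕ Fin k) :=
  SimpleGraph.fromRel fun a b =>
    (∃ x y, a = Sum.inl x ∧ b = Sum.inl y ∧ U.Adj x y) ∨
    (∃ j : Fin k, j.val < k - 1 ∧ a = Sum.inl w ∧ b = Sum.inr j) ∨
    (∃ j₀ j₁ : Fin k, j₀.val = 0 ∧ j₁.val = k - 1 ∧ a = Sum.inr j₀ ∧ b = Sum.inr j₁)

/-- The graph obtained from `H` by attaching a pendant path of length 2 at `w`:
two new vertices `v = Sum.inr 0` and `u = Sum.inr 1` with edges `w v` and `v u`. -/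
def addPath2 {V : Type*} (H : SimpleGraph V) (w : V) : SimpleGraph (V ⊕ Fin 2) :=
  SimpleGraph.fromRel fun a b =>
    (∃ x y, a = Sum.inl x ∧ b = Sum.inl y ∧ H.Adj x y) ∨
    (a = Sum.inl w ∧ b = Sum.inr 0) ∨
    (a = Sum.inr 0 ∧ b = Sum.inr 1)

lemma addPath2_adj {V : Type*} (H : SimpleGraph V) (w : V) (a b : V ⊕ Fin 2) :
    (addPath2 H w).Adj a b ↔
      (∃ x y, a = Sum.inl x ∧ b = Sum.inl y ∧ H.Adj x y) ∨
      (a = Sum.inl w ∧ b = Sum.inr 0) ∨ (a = Sum.inr 0 ∧ b = Sum.inl w) ∨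
      (a = Sum.inr 0 ∧ b = Sum.inr 1) ∨ (a = Sum.inr 1 ∧ b = Sum.inr 0) := by
  simp only [addPath2, fromRel_adj]
  constructor
  · rintro ⟨hne, (⟨x, y, rfl, rfl, hxy⟩ | ⟨rfl, rfl⟩ | ⟨rfl, rfl⟩) |
      (⟨x, y, rfl, rfl, hxy⟩ | ⟨rfl, rfl⟩ | ⟨rfl, rfl⟩)⟩
    · exact Or.inl ⟨x, y, rfl, rfl, hxy⟩
    · exact Or.inr (Or.inl ⟨rfl, rfl⟩)
    · exact Or.inr (Or.inr (Or.inr (Or.inl ⟨rfl, rfl⟩)))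
    · exact Or.inl ⟨y, x, rfl, rfl, hxy.symm⟩
    · exact Or.inr (Or.inr (Or.inl ⟨rfl, rfl⟩))
    · exact Or.inr (Or.inr (Or.inr (Or.inr ⟨rfl, rfl⟩)))
  · rintro (⟨x, y, rfl, rfl, hxy⟩ | ⟨rfl, rfl⟩ | ⟨rfl, rfl⟩ | ⟨rfl, rfl⟩ | ⟨rfl, rfl⟩)
    · exact ⟨by simpa using hxy.ne, Or.inl (Or.inl ⟨x, y, rfl, rfl, hxy⟩)⟩
    · exact ⟨by simp, Or.inl (Or.inr (Or.inl ⟨rfl, rfl⟩))⟩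
    · exact ⟨by simp, Or.inr (Or.inr (Or.inl ⟨rfl, rfl⟩))⟩
    · exact ⟨by simp, Or.inl (Or.inr (Or.inr ⟨rfl, rfl⟩))⟩
    · exact ⟨by simp, Or.inr (Or.inr (Or.inr ⟨rfl, rfl⟩))⟩

lemma exists_maxDissoc {V : Type*} [Finite V] (G : SimpleGraph V) (S : Set V)
    (hS : IsDissoc G S) : ∃ T, IsMaxDissoc G T ∧ S ⊆ T := by
  obtain ⟨T, hT, hmax⟩ := Set.Finite.exists_maximalFor (id : Set V → Set V)
    {T | IsDissoc G T ∧ S ⊆ T} (Set.toFinite _) ⟨S, hS, subset_rfl⟩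
  exact ⟨T, ⟨hT.1, fun T' hT' hsub => le_antisymm hsub (hmax ⟨hT', hT.2.trans hsub⟩ hsub)⟩, hT.2⟩

/-- let `H` be a unicyclic graph, `w ∈ V(H)`, and `G` the unicyclic graph
obtained from `H` by attaching a pendant path of length 2 at `w` (new vertices `v, u` with
edges `w v` and `v u`). Then `φ(G) ≥ φ(H) + 1`. -/
theorem stmt19 {V : Type*} [Fintype V] (H : SimpleGraph V) (hH : IsUnicyclic H) (w : V) :
    phi H + 1 ≤ phi (addPath2 H w) := by
  classical
  set G := addPath2 H w with hG
  set F : Set V → Set (V ⊕ Fin 2) := fun S =>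
    Sum.inl '' S ∪ (if w ∈ S then {Sum.inr 1} else {Sum.inr 0, Sum.inr 1}) with hF
  have hinl : ∀ (S : Set V) (x : V), Sum.inl x ∈ F S ↔ x ∈ S := by
    intro S x; by_cases hw : w ∈ S <;> simp [hF, hw]
  have hinr0 : ∀ S : Set V, Sum.inr (0 : Fin 2) ∈ F S ↔ w ∉ S := by
    intro S; by_cases hw : w ∈ S <;>
      simp [hF, hw, (by decide : (0 : Fin 2) ≠ 1)]
  have hinr1 : ∀ S : Set V, Sum.inr (1 : Fin 2) ∈ F S := by
    intro S; by_cases hw : w ∈ S <;> simp [hF, hw]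
  -- restriction of a dissociation set of G to V is a dissociation set of H
  have hrestrict : ∀ T : Set (V ⊕ Fin 2), IsDissoc G T →
      IsDissoc H {x | Sum.inl x ∈ T} := by
    intro T hT y hy a ha b hb
    have h := hT (Sum.inl y) hy
      (Set.mem_setOf.2 ⟨ha.1, (addPath2_adj H w _ _).2 (Or.inl ⟨y, a, rfl, rfl, ha.2⟩)⟩)
      (Set.mem_setOf.2 ⟨hb.1, (addPath2_adj H w _ _).2 (Or.inl ⟨y, b, rfl, rfl, hb.2⟩)⟩)
    simpa using h
  -- neighbor structure inside F S
  have hnbr : ∀ (S : Set V) (z a : V ⊕ Fin 2), z ∈ F S → a ∈ F S → G.Adj z a →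
      (∃ x y, z = Sum.inl x ∧ a = Sum.inl y ∧ x ∈ S ∧ y ∈ S ∧ H.Adj x y) ∨
      (z = Sum.inr 0 ∧ a = Sum.inr 1) ∨ (z = Sum.inr 1 ∧ a = Sum.inr 0) := by
    intro S z a hz ha hadj
    rcases (addPath2_adj H w z a).1 hadj with
      ⟨x, y, rfl, rfl, hxy⟩ | ⟨rfl, rfl⟩ | ⟨rfl, rfl⟩ | ⟨rfl, rfl⟩ | ⟨rfl, rfl⟩
    · exact Or.inl ⟨x, y, rfl, rfl, (hinl S x).1 hz, (hinl S y).1 ha, hxy⟩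
    · exact absurd ((hinl S w).1 hz) ((hinr0 S).1 ha)
    · exact absurd ((hinl S w).1 ha) ((hinr0 S).1 hz)
    · exact Or.inr (Or.inl ⟨rfl, rfl⟩)
    · exact Or.inr (Or.inr ⟨rfl, rfl⟩)
  have hFdissoc : ∀ S : Set V, IsDissoc H S → IsDissoc G (F S) := by
    intro S hS z hz a ha b hb
    obtain ⟨haF, hadja⟩ := ha
    obtain ⟨hbF, hbadj⟩ := hb
    rcases hnbr S z a hz haF hadja with
      ⟨x, y, rfl, rfl, hxS, hyS, hxy⟩ | ⟨rfl, rfl⟩ | ⟨rfl, rfl⟩ <;>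
      rcases hnbr S _ b hz hbF hbadj with
        ⟨x', y', hzx, rfl, hxS', hyS', hxy'⟩ | ⟨hz0, rfl⟩ | ⟨hz1, rfl⟩
    · obtain rfl : x = x' := by injection hzx
      exact congrArg Sum.inl (hS x hxS ⟨hyS, hxy⟩ ⟨hyS', hxy'⟩)
    · exact absurd hz0 (by simp)
    · exact absurd hz1 (by simp)
    · exact absurd hzx (by simp)
    · rfl
    · exact absurd hz1 (by intro h; injection h with h; exact absurd h (by decide))
    · exact absurd hzx (by simp)
    · exact absurd hz0 (by intro h; injection h with h; exact absurd h (by decide))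
    · rfl
  have hFmax : ∀ S : Set V, IsMaxDissoc H S → IsMaxDissoc G (F S) := by
    intro S hSmax
    obtain ⟨hSd, hSm⟩ := hSmax
    refine ⟨hFdissoc S hSd, ?_⟩
    intro T hT hsub
    refine hsub.antisymm ?_
    have hkey : ∀ x : V, Sum.inl x ∈ T → x ∈ S := by
      intro x hx
      have hSeq : S = {x | Sum.inl x ∈ T} :=
        hSm _ (hrestrict T hT) (fun y hy => hsub ((hinl S y).2 hy))
      rw [hSeq]; exact hx
    intro z hzT
    rcases z with x | j
    · exact (hinl S x).2 (hkey x hzT)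
    · fin_cases j
      · by_cases hw : w ∈ S
        · have h1 : Sum.inl w ∈ T := hsub ((hinl S w).2 hw)
          have h2 : Sum.inr 1 ∈ T := hsub (hinr1 S)
          have hadj1 : G.Adj (Sum.inr 0) (Sum.inl w) :=
            (addPath2_adj H w _ _).2 (Or.inr (Or.inr (Or.inl ⟨rfl, rfl⟩)))
          have hadj2 : G.Adj (Sum.inr 0) (Sum.inr 1) :=
            (addPath2_adj H w _ _).2 (Or.inr (Or.inr (Or.inr (Or.inl ⟨rfl, rfl⟩))))
          have := hT (Sum.inr 0) hzT ⟨h1, hadj1⟩ ⟨h2, hadj2⟩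
          simp at this
        · exact (hinr0 S).2 hw
      · exact hinr1 S
  -- the extra maximal dissociation set containing {inl w, inr 0}
  have hpair : IsDissoc G {Sum.inl w, Sum.inr 0} := by
    intro z hz a ha b hb
    obtain ⟨haP, hadja⟩ := ha
    obtain ⟨hbP, hbadj⟩ := hb
    rcases hz with rfl | rfl
    · rcases haP with rfl | rfl
      · exact absurd hadja (G.irrefl)
      · rcases hbP with rfl | rfl
        · exact absurd hbadj (G.irrefl)
        · rfl
    · rcases haP with rfl | rfl
      · rcases hbP with rfl | rfl
        · rfl
        · exact absurd hbadj (G.irrefl)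
      · exact absurd hadja (G.irrefl)
  obtain ⟨Sstar, hSstar, hsubstar⟩ := exists_maxDissoc G _ hpair
  have hw0 : Sum.inl w ∈ Sstar := hsubstar (Or.inl rfl)
  have h0 : Sum.inr (0 : Fin 2) ∈ Sstar := hsubstar (Or.inr rfl)
  have h1not : Sum.inr (1 : Fin 2) ∉ Sstar := by
    intro h1
    have hadj1 : G.Adj (Sum.inr 0) (Sum.inl w) :=
      (addPath2_adj H w _ _).2 (Or.inr (Or.inr (Or.inl ⟨rfl, rfl⟩)))
    have hadj2 : G.Adj (Sum.inr 0) (Sum.inr 1) :=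
      (addPath2_adj H w _ _).2 (Or.inr (Or.inr (Or.inr (Or.inl ⟨rfl, rfl⟩))))
    have := hSstar.1 (Sum.inr 0) h0 ⟨hw0, hadj1⟩ ⟨h1, hadj2⟩
    simp at this
  -- counting
  have hinj : Set.InjOn F {S : Set V | IsMaxDissoc H S} := by
    intro S1 _ S2 _ heq
    ext x
    rw [← hinl S1 x, heq, hinl S2 x]
  have hnotmem : Sstar ∉ F '' {S : Set V | IsMaxDissoc H S} := by
    rintro ⟨S, _, rfl⟩
    exact h1not (hinr1 S)
  have hsubB : insert Sstar (F '' {S : Set V | IsMaxDissoc H S}) ⊆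
      {S : Set (V ⊕ Fin 2) | IsMaxDissoc G S} := by
    rintro T (rfl | ⟨S, hS, rfl⟩)
    · exact hSstar
    · exact hFmax S hS
  calc phi H + 1 = (F '' {S : Set V | IsMaxDissoc H S}).ncard + 1 := by
        rw [phi, Set.ncard_image_of_injOn hinj]
    _ = (insert Sstar (F '' {S : Set V | IsMaxDissoc H S})).ncard := by
        rw [Set.ncard_insert_of_notMem hnotmem (Set.toFinite _)]
    _ ≤ phi (addPath2 H w) := Set.ncard_le_ncard hsubB (Set.toFinite _)
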